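/- arXiv:2501.04200 — 3 statements merged into one kernel-verified Lean document; each statement's English description precedes it below -/
import Mathlib

section
/- Let Ψ ⊆ Δ_ℓ^+ be a root ideal, M a multiset supported in [ℓ], γ ∈ ℤ^ℓ, and z ∈ [ℓ]. If n > γ_z + ℓ − z, then L_z^n K(Ψ; M; γ) = 0, i.e., K(Ψ; M; γ − n ε_z) = 0. -/
open scoped BigOperators

noncomputable section

attribute [local instance] Classical.propDecidable

/-- The ring of symmetric functions over `ℚ`, modeled as the polynomial ring
`ℚ[h₁, h₂, …]` with variable `n` corresponding to the complete homogeneous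
symmetric function `h_{n+1}`. -/
abbrev Lambda : Type := MvPolynomial ℕ ℚ

/-- The complete homogeneous symmetric function `h_m` for `m : ℤ`, with the
conventions `h_m = 0` for `m < 0` and `h_0 = 1`. -/
def hh (m : ℤ) : Lambda :=
  if m < 0 then 0 else if m = 0 then 1 else MvPolynomial.X (m.toNat - 1)

/-- Generalized binomial coefficient `C(n, k)` for `n : ℤ`, `k : ℕ`. -/
def zchoose (n : ℤ) (k : ℕ) : ℤ :=
  if 0 ≤ n then n.toNat.choose k else (-1) ^ k * ((k - 1 - n).toNat.choose k)

/-- `k_m^{(r)} = ∑_{i=0}^m C(r+i-1, i) h_{m-i}` (which is `0` for `m < 0`). -/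
def kk (m : ℤ) (r : ℕ) : Lambda :=
  ∑ i ∈ Finset.range (m.toNat + 1), (zchoose ((r : ℤ) + i - 1) i : ℚ) • hh (m - i)

/-- `g_γ = det (k_{γ_i + j - i}^{(i-1)})_{1 ≤ i,j ≤ ℓ}` (here indices are 1-based;
`γ : ℕ → ℤ` is read on `[1, ℓ]`). -/
def gf (ℓ : ℕ) (γ : ℕ → ℤ) : Lambda :=
  Matrix.det (Matrix.of fun i j : Fin ℓ => kk (γ (i.1 + 1) + (j.1 : ℤ) - (i.1 : ℤ)) i.1)

/-- `Δ⁺_ℓ = {(i,j) : 1 ≤ i < j ≤ ℓ}`. -/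
def Delta (ℓ : ℕ) : Finset (ℕ × ℕ) :=
  (Finset.Icc 1 ℓ ×ˢ Finset.Icc 1 ℓ).filter fun p => p.1 < p.2

/-- A root ideal: an upper order ideal of `Δ⁺_ℓ` for the order
`(a,b) ≤ (c,d) ↔ a ≥ c ∧ b ≤ d`. -/
def IsRootIdeal (ℓ : ℕ) (Ψ : Finset (ℕ × ℕ)) : Prop :=
  Ψ ⊆ Delta ℓ ∧ ∀ p ∈ Ψ, ∀ q ∈ Delta ℓ, q.1 ≤ p.1 → p.2 ≤ q.2 → q ∈ Ψ

/-- standard basis vector `ε_z`. -/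
def eps (z : ℕ) : ℕ → ℤ := fun i => if i = z then 1 else 0

/-- `k_γ := k_{γ_1}^{(0)} ⋯ k_{γ_ℓ}^{(ℓ-1)}`. -/
def kprod (ℓ : ℕ) (γ : ℕ → ℤ) : Lambda :=
  ∏ i ∈ Finset.Icc 1 ℓ, kk (γ i) (i - 1)

/-- The net shift of `γ` produced by applying the raising operators `R_{ij}` for
all `(i,j) ∈ T`. -/
def epsR (T : Finset (ℕ × ℕ)) (i : ℕ) : ℤ :=
  ((T.filter fun p => p.1 = i).card : ℤ) - ((T.filter fun p => p.2 = i).card : ℤ)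

/-- The Katalan function
`K(Ψ; M; γ) = ∏_{z ∈ M} (1 - L_z) ∏_{(i,j) ∈ Ψ} (1 - R_{ij})⁻¹ g_γ`,
written via the equivalent finite expansion
`∏_{z ∈ M} (1 - L_z) ∏_{(i,j) ∈ Δ⁺_ℓ \ Ψ} (1 - R_{ij}) k_γ`. -/
def Katalan (ℓ : ℕ) (Ψ : Finset (ℕ × ℕ)) (M : Multiset ℕ) (γ : ℕ → ℤ) : Lambda :=
  (M.powerset.map fun S =>
    ((-1 : ℚ) ^ Multiset.card S) •
      ∑ T ∈ (Delta ℓ \ Ψ).powerset,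
        ((-1 : ℚ) ^ T.card) • kprod ℓ (fun i => γ i - S.count i + epsR T i)).sum

/-- The multiset `M` is supported in `[ℓ]`. -/
def SuppIn (ℓ : ℕ) (M : Multiset ℕ) : Prop := ∀ x ∈ M, 1 ≤ x ∧ x ≤ ℓ

/-- `L(R)`: the multiset of second components of the roots in `R`. -/
def colMultiset (R : Finset (ℕ × ℕ)) : Multiset ℕ := R.val.map Prod.snd

/-- `Δ^k(μ) = {(i,j) ∈ Δ⁺_ℓ : k - μ_i + i < j}`. -/
def Dk (ℓ k : ℕ) (μ : ℕ → ℤ) : Finset (ℕ × ℕ) :=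
  (Delta ℓ).filter fun p => (k : ℤ) - μ p.1 + (p.1 : ℤ) < (p.2 : ℤ)

/-- The (generalized) closed `k`-Schur Katalan function
`g̃_μ^{(k)} = K(Δ^k(μ); Δ^k(μ); μ)`. -/
def cKS (ℓ k : ℕ) (μ : ℕ → ℤ) : Lambda :=
  Katalan ℓ (Dk ℓ k μ) (colMultiset (Dk ℓ k μ)) μ

/-- `L_z g̃_μ^{(k)} = K(Δ^k(μ); Δ^k(μ); μ - ε_z)`. -/
def Lg (ℓ k : ℕ) (μ : ℕ → ℤ) (z : ℕ) : Lambda :=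
  Katalan ℓ (Dk ℓ k μ) (colMultiset (Dk ℓ k μ)) (fun i => μ i - eps z i)

/-- `μ ∈ P̃_ℓ^k`: `μ_i ≤ k` and `μ_1 + ℓ - 1 ≥ μ_2 + ℓ - 2 ≥ ⋯ ≥ μ_ℓ`. -/
def tP (ℓ k : ℕ) (μ : ℕ → ℤ) : Prop :=
  (∀ i, 1 ≤ i → i ≤ ℓ → μ i ≤ k) ∧ ∀ i, 1 ≤ i → i + 1 ≤ ℓ → μ (i + 1) ≤ μ i + 1

/-- `λ ∈ P_ℓ^k`: a `k`-bounded partition of length `ℓ` (weakly decreasing,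
parts in `[0, k]`, vanishing beyond row `ℓ`). -/
def IsPartition (ℓ k : ℕ) (lam : ℕ → ℤ) : Prop :=
  (∀ i, 1 ≤ i → i ≤ ℓ → 0 ≤ lam i ∧ lam i ≤ (k : ℤ)) ∧
  (∀ i, 1 ≤ i → lam (i + 1) ≤ lam i) ∧ (∀ i, ℓ < i → lam i = 0)

/-- `|λ|`, the size. -/
def psize (ℓ : ℕ) (lam : ℕ → ℤ) : ℤ := ∑ i ∈ Finset.Icc 1 ℓ, lam i

/-- A removable root of `Ψ`. -/
def Removable (ℓ : ℕ) (Ψ : Finset (ℕ × ℕ)) (p : ℕ × ℕ) : Prop :=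
  p ∈ Ψ ∧ IsRootIdeal ℓ (Ψ.erase p)

/-- An addable root of `Ψ`. -/
def Addable (ℓ : ℕ) (Ψ : Finset (ℕ × ℕ)) (p : ℕ × ℕ) : Prop :=
  p ∈ Delta ℓ ∧ p ∉ Ψ ∧ IsRootIdeal ℓ (insert p Ψ)

/-- Row `r` of `Ψ`. -/
def rowSet (Ψ : Finset (ℕ × ℕ)) (r : ℕ) : Finset ℕ :=
  (Ψ.filter fun p => p.1 = r).image Prod.snd

/-- Column `c` of `Ψ`. -/
def colSet (Ψ : Finset (ℕ × ℕ)) (c : ℕ) : Finset ℕ :=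
  (Ψ.filter fun p => p.2 = c).image Prod.fst

/-- `Ψ` has a wall in rows `r, r+1`. -/
def HasWall (Ψ : Finset (ℕ × ℕ)) (r : ℕ) : Prop :=
  (rowSet Ψ r).card = (rowSet Ψ (r + 1)).card

/-- `Ψ` has a ceiling in columns `c, c+1`. -/
def HasCeiling (Ψ : Finset (ℕ × ℕ)) (c : ℕ) : Prop :=
  (colSet Ψ c).card = (colSet Ψ (c + 1)).card

/-- `Ψ` has a mirror in rows `r, r+1`. -/
def HasMirror (ℓ : ℕ) (Ψ : Finset (ℕ × ℕ)) (r : ℕ) : Prop :=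
  ∃ c, r + 2 ≤ c ∧ c ≤ ℓ - 1 ∧ Removable ℓ Ψ (r, c) ∧ Removable ℓ Ψ (r + 1, c + 1)

/-- `b` is the bottom row of the root ideal `Ψ` (with `b = 0` if `Ψ = ∅`). -/
def IsBottom (Ψ : Finset (ℕ × ℕ)) (b : ℕ) : Prop :=
  (∀ p ∈ Ψ, p.1 ≤ b) ∧ (b = 0 ∨ ∃ q, (b, q) ∈ Ψ)

/-- `downStep ℓ Ψ x j` means `down_Ψ(x) = j`, i.e. `(x,j)` is a removable root. -/
def downStep (ℓ : ℕ) (Ψ : Finset (ℕ × ℕ)) (x j : ℕ) : Prop := Removable ℓ Ψ (x, j)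

/-- Being in the same bounce path of `Ψ`. -/
def SamePath (ℓ : ℕ) (Ψ : Finset (ℕ × ℕ)) : ℕ → ℕ → Prop :=
  Relation.EqvGen (downStep ℓ Ψ)

/-- `top_Ψ(x)`: the minimum vertex of the bounce path of `Ψ` containing `x`. -/
def topV (ℓ : ℕ) (Ψ : Finset (ℕ × ℕ)) (x : ℕ) : ℕ := sInf {y | SamePath ℓ Ψ y x}

/-- The algebra homomorphism `Λ → Λ[t]`, `f ↦ ∑_d (e_d^⊥ f) t^d`; it is the
unique algebra map sending `h_m ↦ h_m + t h_{m-1}`. -/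
def Eop : Lambda →ₐ[ℚ] Polynomial Lambda :=
  MvPolynomial.aeval fun n =>
    Polynomial.C (MvPolynomial.X n) + Polynomial.X * Polynomial.C (hh (n : ℤ))

/-- `e_d^⊥`, the Hall-adjoint of multiplication by the elementary symmetric
function `e_d`. -/
def eperp (d : ℕ) (f : Lambda) : Lambda := (Eop f).coeff d

/-- `G_{1^m}^⊥ = ∑_{i ≥ 0} (-1)^i C(m-1+i, m-1) e_{m+i}^⊥`, the Hall-adjoint of
multiplication by the stable Grothendieck polynomial `G_{1^m}`. -/
def Gperp (m : ℕ) (f : Lambda) : Lambda :=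
  (Eop f).sum fun d c =>
    (if m ≤ d then
        ((-1 : ℚ)) ^ (d - m) * ((zchoose ((m : ℤ) - 1 + ((d - m : ℕ) : ℤ)) (d - m) : ℤ) : ℚ)
      else 0) • c


lemma kk_neg (m : ℤ) (r : ℕ) (h : m < 0) : kk m r = 0 := by
  have ht : m.toNat = 0 := Int.toNat_of_nonpos h.le
  simp [kk, ht, hh, h, sub_zero]

lemma kprod_eq_zero (ℓ : ℕ) (γ : ℕ → ℤ) (z : ℕ) (hz1 : 1 ≤ z) (hz2 : z ≤ ℓ)
    (h : γ z < 0) : kprod ℓ γ = 0 := by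
  refine Finset.prod_eq_zero (Finset.mem_Icc.mpr ⟨hz1, hz2⟩) ?_
  exact kk_neg _ _ h

lemma epsR_le (ℓ : ℕ) (T : Finset (ℕ × ℕ)) (hT : T ⊆ Delta ℓ) (z : ℕ) (hz : z ≤ ℓ) :
    epsR T z ≤ (ℓ : ℤ) - z := by
  have h1 : (T.filter fun p => p.1 = z).card ≤ (Finset.Icc (z + 1) ℓ).card := by
    apply Finset.card_le_card_of_injOn Prod.snd
    · intro p hp
      simp only [Finset.mem_coe, Finset.mem_filter] at hp
      have := hT hp.1
      simp only [Delta, Finset.mem_filter, Finset.mem_product, Finset.mem_Icc] at this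
      refine Finset.mem_Icc.mpr ⟨?_, this.1.2.2⟩
      omega
    · intro p hp q hq hpq
      simp only [Finset.mem_coe, Finset.mem_filter] at hp hq
      exact Prod.ext (hp.2.trans hq.2.symm) hpq
  have h2 : (Finset.Icc (z + 1) ℓ).card = ℓ - z := by
    rw [Nat.card_Icc]; omega
  have h3 : ((T.filter fun p => p.1 = z).card : ℤ) ≤ (ℓ : ℤ) - z := by
    rw [h2] at h1
    calc ((T.filter fun p => p.1 = z).card : ℤ) ≤ ((ℓ - z : ℕ) : ℤ) := by exact_mod_cast h1
      _ ≤ (ℓ : ℤ) - z := by push_cast; omega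
  have h4 : (0 : ℤ) ≤ ((T.filter fun p => p.2 = z).card : ℤ) := Int.ofNat_nonneg _
  unfold epsR
  omega

/-- If `n > γ_z + ℓ - z`, then `L_z^n K(Ψ; M; γ) = K(Ψ; M; γ - n ε_z) = 0`. -/
theorem katalan_lower_vanish (ℓ : ℕ) (Ψ : Finset (ℕ × ℕ)) (hΨ : IsRootIdeal ℓ Ψ)
    (M : Multiset ℕ) (hM : SuppIn ℓ M) (γ : ℕ → ℤ) (z : ℕ)
    (hz1 : 1 ≤ z) (hz2 : z ≤ ℓ) (n : ℕ)
    (hn : γ z + (ℓ : ℤ) - (z : ℤ) < (n : ℤ)) :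
    Katalan ℓ Ψ M (fun i => γ i - (n : ℤ) * eps z i) = 0 := by
  unfold Katalan
  apply Multiset.sum_eq_zero
  intro x hx
  simp only [Multiset.mem_map] at hx
  obtain ⟨S, hS, rfl⟩ := hx
  have hsum : (∑ T ∈ (Delta ℓ \ Ψ).powerset,
      ((-1 : ℚ) ^ T.card) • kprod ℓ
        (fun i => (γ i - (n : ℤ) * eps z i) - S.count i + epsR T i)) = 0 := by
    apply Finset.sum_eq_zero
    intro T hT
    have hTsub : T ⊆ Delta ℓ := by
      have := Finset.mem_powerset.mp hT
      exact this.trans (Finset.sdiff_subset)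
    have h1 := epsR_le ℓ T hTsub z hz2
    have h2 : (0 : ℤ) ≤ (S.count z : ℤ) := Int.ofNat_nonneg _
    have hk : kprod ℓ (fun i => (γ i - (n : ℤ) * eps z i) - S.count i + epsR T i) = 0 := by
      apply kprod_eq_zero ℓ _ z hz1 hz2
      have heps : eps z z = 1 := by simp [eps]
      simp only [heps, mul_one]
      omega
    rw [hk, smul_zero]
  rw [hsum, smul_zero]


end
end

section
/- Let λ be a k-bounded partition of length ℓ, let bot be the bottom of the root ideal Δ^k(λ), and let z ∈ [bot]. Set μ := λ − ε_z ∈ P̃_ℓ^k and d := down_{Δ^k(λ)}(z). Then L_z g̃_λ^{(k)} = g̃_μ^{(k)} − L_d g̃_μ^{(k)} + L_d g̃_λ^{(k)}. -/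
open scoped BigOperators

noncomputable section

attribute [local instance] Classical.propDecidable

lemma epsR_insert (a c : ℕ) (T : Finset (ℕ × ℕ)) (hp : (a, c) ∉ T) (hne : a ≠ c) (i : ℕ) :
    epsR (insert (a, c) T) i = epsR T i + eps a i - eps c i := by
  have h1 : ((insert (a, c) T).filter fun q => q.1 = i).card
      = ((T.filter fun q => q.1 = i).card) + (if i = a then 1 else 0) := by
    rw [Finset.filter_insert]
    simp only []
    split_ifs with h h' h'
    · rw [Finset.card_insert_of_notMem (fun hmem => hp (Finset.mem_filter.1 hmem).1)]
    · exact absurd h.symm h'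
    · exact absurd h'.symm h
    · rfl
  have h2 : ((insert (a, c) T).filter fun q => q.2 = i).card
      = ((T.filter fun q => q.2 = i).card) + (if i = c then 1 else 0) := by
    rw [Finset.filter_insert]
    simp only []
    split_ifs with h h' h'
    · rw [Finset.card_insert_of_notMem (fun hmem => hp (Finset.mem_filter.1 hmem).1)]
    · exact absurd h.symm h'
    · exact absurd h'.symm h
    · rfl
  simp only [epsR, h1, h2, eps]
  push_cast
  ring

lemma Katalan_cons (ℓ : ℕ) (Ψ : Finset (ℕ × ℕ)) (c : ℕ) (M : Multiset ℕ) (γ : ℕ → ℤ) :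
    Katalan ℓ Ψ (c ::ₘ M) γ
      = Katalan ℓ Ψ M γ - Katalan ℓ Ψ M (fun i => γ i - eps c i) := by
  have key : ∀ S : Multiset ℕ,
      ((-1 : ℚ) ^ Multiset.card (c ::ₘ S)) •
        ∑ T ∈ (Delta ℓ \ Ψ).powerset,
          ((-1 : ℚ) ^ T.card) • kprod ℓ (fun i => γ i - ((c ::ₘ S).count i : ℤ) + epsR T i)
      = -(((-1 : ℚ) ^ Multiset.card S) •
          ∑ T ∈ (Delta ℓ \ Ψ).powerset,
            ((-1 : ℚ) ^ T.card) • kprod ℓ (fun i => γ i - eps c i - (S.count i : ℤ) + epsR T i)) := by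
    intro S
    have harg : ∀ T : Finset (ℕ × ℕ), (fun i => γ i - ((c ::ₘ S).count i : ℤ) + epsR T i)
        = fun i => γ i - eps c i - (S.count i : ℤ) + epsR T i := by
      intro T
      funext i
      simp only [Multiset.count_cons, eps]
      push_cast
      ring
    simp only [harg, Multiset.card_cons, pow_succ, mul_smul, neg_one_smul, smul_neg]
  simp only [Katalan, Multiset.powerset_cons, Multiset.map_add, Multiset.sum_add,
    Multiset.map_map, Function.comp]
  simp only [key]
  rw [Multiset.sum_map_neg, ← sub_eq_add_neg]

lemma Katalan_erase (ℓ : ℕ) (Ψ : Finset (ℕ × ℕ)) (M : Multiset ℕ) (γ : ℕ → ℤ)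
    (a c : ℕ) (hr : (a, c) ∈ Ψ) (hΨ : Ψ ⊆ Delta ℓ) :
    Katalan ℓ (Ψ.erase (a, c)) M γ
      = Katalan ℓ Ψ M γ - Katalan ℓ Ψ M (fun i => γ i + eps a i - eps c i) := by
  have hrD : (a, c) ∈ Delta ℓ := hΨ hr
  have hac : a < c := (Finset.mem_filter.1 hrD).2
  have hne : a ≠ c := Nat.ne_of_lt hac
  have hset : Delta ℓ \ (Ψ.erase (a, c)) = insert (a, c) (Delta ℓ \ Ψ) := by
    ext q
    simp only [Finset.mem_sdiff, Finset.mem_erase, Finset.mem_insert, not_and_or, not_not]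
    constructor
    · rintro ⟨hq, h | h⟩
      · left; exact h
      · right; exact ⟨hq, h⟩
    · rintro (h | ⟨hq, h⟩)
      · subst h; exact ⟨hrD, Or.inl rfl⟩
      · exact ⟨hq, Or.inr h⟩
  have hnotmem : (a, c) ∉ Delta ℓ \ Ψ := fun h => (Finset.mem_sdiff.1 h).2 hr
  simp only [Katalan, hset]
  rw [← Multiset.sum_map_sub]
  apply congrArg Multiset.sum
  apply Multiset.map_congr rfl
  intro S hS
  rw [Finset.sum_powerset_insert hnotmem, smul_add, sub_eq_add_neg]
  congr 1
  have hper : ∀ T ∈ (Delta ℓ \ Ψ).powerset,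
      ((-1 : ℚ) ^ (insert (a, c) T).card) •
          kprod ℓ (fun i => γ i - (S.count i : ℤ) + epsR (insert (a, c) T) i)
      = -(((-1 : ℚ) ^ T.card) •
          kprod ℓ (fun i => γ i + eps a i - eps c i - (S.count i : ℤ) + epsR T i)) := by
    intro T hT
    have hrT : (a, c) ∉ T := fun h => hnotmem (Finset.mem_powerset.1 hT h)
    have harg : (fun i => γ i - (S.count i : ℤ) + epsR (insert (a, c) T) i)
        = fun i => γ i + eps a i - eps c i - (S.count i : ℤ) + epsR T i := by
      funext i
      rw [epsR_insert a c T hrT hne]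
      ring
    rw [harg, Finset.card_insert_of_notMem hrT, pow_succ, mul_smul, neg_one_smul, smul_neg]
  rw [Finset.sum_congr rfl hper, Finset.sum_neg_distrib, smul_neg]

lemma colMultiset_eq_cons (Ψ : Finset (ℕ × ℕ)) (r : ℕ × ℕ) (hr : r ∈ Ψ) :
    colMultiset Ψ = r.2 ::ₘ colMultiset (Ψ.erase r) := by
  unfold colMultiset
  rw [Finset.erase_val, ← Multiset.map_cons, Multiset.cons_erase hr]

lemma mem_Dk (ℓ k : ℕ) (lam : ℕ → ℤ) (i j : ℕ) :
    (i, j) ∈ Dk ℓ k lam ↔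
      ((1 ≤ i ∧ i ≤ ℓ) ∧ (1 ≤ j ∧ j ≤ ℓ) ∧ i < j) ∧ (k : ℤ) - lam i + i < j := by
  simp only [Dk, Delta, Finset.mem_filter, Finset.mem_product, Finset.mem_Icc]
  tauto

lemma Dk_erase (ℓ k : ℕ) (lam : ℕ → ℤ)
    (hbd : ∀ i, 1 ≤ i → i ≤ ℓ → 0 ≤ lam i ∧ lam i ≤ (k : ℤ)) (z d : ℕ)
    (hd : Removable ℓ (Dk ℓ k lam) (z, d)) :
    Dk ℓ k (fun i => lam i - eps z i) = (Dk ℓ k lam).erase (z, d) := by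
  obtain ⟨hmem, hsub, hup⟩ := hd
  obtain ⟨⟨⟨hz1, hzl⟩, ⟨hd1, hdl⟩, hzd⟩, hlt⟩ := (mem_Dk ℓ k lam z d).1 hmem
  have hlamz : lam z ≤ (k : ℤ) := (hbd z hz1 hzl).2
  have hdeq : (d : ℤ) = (k : ℤ) - lam z + z + 1 := by
    by_contra hnee
    have hgt : (k : ℤ) - lam z + z + 1 < d := by omega
    have hd2 : z + 2 ≤ d := by omega
    have hmem1 : (z, d - 1) ∈ (Dk ℓ k lam).erase (z, d) := by
      rw [Finset.mem_erase, mem_Dk]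
      refine ⟨?_, ⟨⟨hz1, hzl⟩, ⟨by omega, by omega⟩, by omega⟩, by omega⟩
      intro hcc
      have : d - 1 = d := congrArg Prod.snd hcc
      omega
    have hmem2 : (z, d) ∈ (Dk ℓ k lam).erase (z, d) := by
      apply hup _ hmem1 _ (Finset.mem_filter.1 hmem).1
      · exact le_refl z
      · exact Nat.sub_le d 1
    exact Finset.notMem_erase _ _ hmem2
  ext p
  obtain ⟨i, j⟩ := p
  rw [Finset.mem_erase, mem_Dk, mem_Dk]
  simp only [ne_eq, Prod.mk.injEq, eps]
  by_cases hiz : i = z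
  · subst hiz
    simp only [if_true, true_and]
    omega
  · simp only [if_neg hiz, sub_zero]
    constructor
    · intro h
      exact ⟨fun hc => absurd hc.1 hiz, h⟩
    · intro h
      exact h.2

/-- For `λ ∈ P_ℓ^k`, `z ∈ [bot]` and `d = down_{Δ^k(λ)}(z)`, we have
`μ := λ - ε_z ∈ P̃_ℓ^k` and
`L_z g̃_λ^{(k)} = g̃_μ^{(k)} - L_d g̃_μ^{(k)} + L_d g̃_λ^{(k)}`. -/
theorem Lg_within_bottom (ℓ k : ℕ) (lam : ℕ → ℤ) (hlam : IsPartition ℓ k lam)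
    (b : ℕ) (hb : IsBottom (Dk ℓ k lam) b) (z : ℕ)
    (hz1 : 1 ≤ z) (hz2 : z ≤ b) (d : ℕ)
    (hd : Removable ℓ (Dk ℓ k lam) (z, d)) :
    tP ℓ k (fun i => lam i - eps z i) ∧
    Lg ℓ k lam z =
      cKS ℓ k (fun i => lam i - eps z i) -
        Lg ℓ k (fun i => lam i - eps z i) d + Lg ℓ k lam d := by
  obtain ⟨hbd, hmono, hvan⟩ := hlam
  have hmem : (z, d) ∈ Dk ℓ k lam := hd.1
  have hsub : Dk ℓ k lam ⊆ Delta ℓ := Finset.filter_subset _ _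
  have hDk : Dk ℓ k (fun i => lam i - eps z i) = (Dk ℓ k lam).erase (z, d) :=
    Dk_erase ℓ k lam hbd z d hd
  have hM : colMultiset (Dk ℓ k lam)
      = d ::ₘ colMultiset ((Dk ℓ k lam).erase (z, d)) :=
    colMultiset_eq_cons _ _ hmem
  constructor
  · refine ⟨fun i h1 h2 => ?_, fun i h1 h2 => ?_⟩
    · have := (hbd i h1 h2).2
      simp only [eps]
      split_ifs <;> omega
    · have h3 := hmono i h1
      simp only [eps]
      split_ifs <;> omega
  · simp only [Lg, cKS, hDk, hM]
    rw [Katalan_cons, Katalan_cons,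
      Katalan_erase ℓ (Dk ℓ k lam) _ _ z d hmem hsub,
      Katalan_erase ℓ (Dk ℓ k lam) _ _ z d hmem hsub]
    beta_reduce
    have e1 : (fun i => lam i - eps z i + eps z i - eps d i)
        = (fun i => lam i - eps d i) := by funext i; ring
    have e2 : (fun i => lam i - eps z i - eps d i + eps z i - eps d i)
        = (fun i => lam i - eps d i - eps d i) := by funext i; ring
    rw [e1, e2]
    abel

end
end

section
/- Let λ be a partition of length ℓ. Then G_{1^ℓ}^⊥ g_λ = g_{λ − 1^ℓ}, where G_{1^m} := ∑_{i≥0} (−1)^i C(m−1+i, m−1) e_{m+i} is a stable Grothendieck polynomial, g_λ := det(k_{λ_i+j−i}^{(i−1)})_{1≤i,j≤ℓ} is a dual stable Grothendieck polynomial, λ − 1^ℓ is obtained by subtracting 1 from every part of λ, and f^⊥ denotes the adjoint of multiplication by f under the Hall inner product. -/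
open scoped BigOperators

noncomputable section

attribute [local instance] Classical.propDecidable

lemma Eop_hh (m : ℤ) : Eop (hh m) = Polynomial.C (hh m) + Polynomial.X * Polynomial.C (hh (m-1)) := by
  rcases lt_trichotomy m 0 with h | h | h
  · have h' : m - 1 < 0 := by omega
    simp [hh, h, h']
  · subst h
    norm_num [hh, Eop]
  · have h0 : ¬ m < 0 := by omega
    have h0' : m ≠ 0 := by omega
    rw [hh]
    simp only [h0, if_false, h0', if_false]
    rw [show Eop (MvPolynomial.X (m.toNat - 1)) = Polynomial.C (MvPolynomial.X (m.toNat - 1)) + Polynomial.X * Polynomial.C (hh ((m.toNat - 1 : ℕ) : ℤ)) from by simp [Eop]]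
    have : ((m.toNat - 1 : ℕ) : ℤ) = m - 1 := by omega
    rw [this, hh]

lemma Eop_kk (m : ℤ) (r : ℕ) :
    Eop (kk m r) = Polynomial.C (kk m r) + Polynomial.X * Polynomial.C (kk (m-1) r) := by
  have hsum : kk (m-1) r = ∑ i ∈ Finset.range (m.toNat + 1),
      (zchoose ((r : ℤ) + i - 1) i : ℚ) • hh (m - 1 - i) := by
    rw [kk]
    apply Finset.sum_subset
    · apply Finset.range_subset_range.mpr
      omega
    · intro i _ hi
      rw [Finset.mem_range, not_lt] at hi
      have : m - 1 - (i : ℤ) < 0 := by omega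
      simp [hh, this]
  rw [kk, map_sum, hsum]
  simp_rw [map_smul, Eop_hh, smul_add, Finset.sum_add_distrib]
  congr 1
  · rw [map_sum]
    simp_rw [Polynomial.smul_C]
  · rw [map_sum, Finset.mul_sum]
    apply Finset.sum_congr rfl
    intro i _
    rw [← mul_smul_comm, Polynomial.smul_C]
    congr 2
    ring

lemma natDegree_linear_prod {ι : Type*} (s : Finset ι) (a b : ι → Lambda) :
    (∏ i ∈ s, (Polynomial.C (a i) + Polynomial.X * Polynomial.C (b i))).natDegree ≤ s.card := by
  refine le_trans (Polynomial.natDegree_prod_le s _) ?_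
  rw [Finset.card_eq_sum_ones]
  apply Finset.sum_le_sum
  intro i _
  refine le_trans (Polynomial.natDegree_add_le _ _) ?_
  simp only [Polynomial.natDegree_C, max_le_iff]
  constructor
  · omega
  · refine le_trans (Polynomial.natDegree_mul_le) ?_
    simp [Polynomial.natDegree_X_le]

lemma coeff_card_linear_prod {ι : Type*} (s : Finset ι) (a b : ι → Lambda) :
    (∏ i ∈ s, (Polynomial.C (a i) + Polynomial.X * Polynomial.C (b i))).coeff s.card
      = ∏ i ∈ s, b i := by
  classical
  induction s using Finset.induction_on with
  | empty => simp
  | insert x s hx ih =>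
    rw [Finset.prod_insert hx, Finset.prod_insert hx, Finset.card_insert_of_notMem hx,
      add_mul, Polynomial.coeff_add, Polynomial.coeff_C_mul, mul_assoc, Polynomial.coeff_X_mul,
      Polynomial.coeff_C_mul, ih,
      Polynomial.coeff_eq_zero_of_natDegree_lt
        (lt_of_le_of_lt (natDegree_linear_prod s a b) (Nat.lt_succ_self _))]
    ring

lemma coeff_det_high (ℓ d : ℕ) (hd : ℓ < d) (A B : Fin ℓ → Fin ℓ → Lambda) :
    (Matrix.det (Matrix.of fun i j =>
      Polynomial.C (A i j) + Polynomial.X * Polynomial.C (B i j))).coeff d = 0 := by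
  rw [Matrix.det_apply, Polynomial.finset_sum_coeff]
  apply Finset.sum_eq_zero
  intro σ _
  rw [Polynomial.coeff_smul]
  rw [Polynomial.coeff_eq_zero_of_natDegree_lt, smul_zero]
  refine lt_of_le_of_lt (le_trans (natDegree_linear_prod Finset.univ (fun i => A (σ i) i) (fun i => B (σ i) i)) ?_) hd
  simp

lemma coeff_det_card (ℓ : ℕ) (A B : Fin ℓ → Fin ℓ → Lambda) :
    (Matrix.det (Matrix.of fun i j =>
      Polynomial.C (A i j) + Polynomial.X * Polynomial.C (B i j))).coeff ℓ = Matrix.det (Matrix.of B) := by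
  rw [Matrix.det_apply, Polynomial.finset_sum_coeff, Matrix.det_apply]
  apply Finset.sum_congr rfl
  intro σ _
  rw [Polynomial.coeff_smul]
  have := coeff_card_linear_prod Finset.univ (fun i => A (σ i) i) (fun i => B (σ i) i)
  simp only [Finset.card_univ, Fintype.card_fin] at this
  rw [show (Matrix.of fun i j => Polynomial.C (A i j) + Polynomial.X * Polynomial.C (B i j) : Matrix (Fin ℓ) (Fin ℓ) _) = fun i j => Polynomial.C (A i j) + Polynomial.X * Polynomial.C (B i j) from rfl]
  rw [this]
  rfl

lemma Eop_gf (ℓ : ℕ) (γ : ℕ → ℤ) :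
    Eop (gf ℓ γ) = Matrix.det (Matrix.of fun i j : Fin ℓ =>
      Polynomial.C (kk (γ (i.1 + 1) + (j.1 : ℤ) - (i.1 : ℤ)) i.1) +
      Polynomial.X * Polynomial.C (kk (γ (i.1 + 1) + (j.1 : ℤ) - (i.1 : ℤ) - 1) i.1)) := by
  rw [gf]
  rw [show (Eop (Matrix.det (Matrix.of fun i j : Fin ℓ => kk (γ (i.1 + 1) + (j.1 : ℤ) - (i.1 : ℤ)) i.1)))
    = Eop.toRingHom (Matrix.det (Matrix.of fun i j : Fin ℓ => kk (γ (i.1 + 1) + (j.1 : ℤ) - (i.1 : ℤ)) i.1)) from rfl]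
  rw [RingHom.map_det]
  congr 1
  apply Matrix.ext
  intro i j
  simp only [RingHom.mapMatrix_apply, Matrix.map_apply, Matrix.of_apply]
  exact Eop_kk _ _

lemma eperp_gf_high (ℓ d : ℕ) (hd : ℓ < d) (γ : ℕ → ℤ) : eperp d (gf ℓ γ) = 0 := by
  rw [eperp, Eop_gf]
  exact coeff_det_high ℓ d hd _ _

lemma eperp_gf_top (ℓ : ℕ) (γ : ℕ → ℤ) :
    eperp ℓ (gf ℓ γ) = gf ℓ (fun i => γ i - 1) := by
  rw [eperp, Eop_gf]
  rw [coeff_det_card ℓ (fun i j : Fin ℓ => kk (γ (i.1 + 1) + (j.1 : ℤ) - (i.1 : ℤ)) i.1)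
    (fun i j : Fin ℓ => kk (γ (i.1 + 1) + (j.1 : ℤ) - (i.1 : ℤ) - 1) i.1)]
  rw [gf]
  congr 1
  ext i j
  simp only [Matrix.of_apply]
  congr 1
  ring

lemma zchoose_zero (n : ℤ) : zchoose n 0 = 1 := by
  unfold zchoose
  split <;> simp

theorem Gperp_g' (ℓ : ℕ) (lam : ℕ → ℤ) :
    Gperp ℓ (gf ℓ lam) = gf ℓ (fun i => lam i - 1) := by
  have htop : (Eop (gf ℓ lam)).coeff ℓ = gf ℓ (fun i => lam i - 1) := eperp_gf_top ℓ lam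
  rw [Gperp, Polynomial.sum_def]
  rw [Finset.sum_eq_single ℓ]
  · rw [htop]
    simp [zchoose_zero]
  · intro d hd hne
    rcases lt_or_gt_of_ne hne with h | h
    · have : ¬ ℓ ≤ d := by omega
      simp [this]
    · exact absurd (eperp_gf_high ℓ d h lam) (Polynomial.mem_support_iff.mp hd)
  · intro hnot
    rw [Polynomial.notMem_support_iff.mp hnot, smul_zero]


/-- For a partition `λ` of length `ℓ`, `G_{1^ℓ}^⊥ g_λ = g_{λ - 1^ℓ}`. -/
theorem Gperp_g (ℓ : ℕ) (lam : ℕ → ℤ)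
    (h1 : ∀ i, 1 ≤ i → i ≤ ℓ → 0 ≤ lam i)
    (h2 : ∀ i, 1 ≤ i → lam (i + 1) ≤ lam i)
    (h3 : ∀ i, ℓ < i → lam i = 0) :
    Gperp ℓ (gf ℓ lam) = gf ℓ (fun i => lam i - 1) := Gperp_g' ℓ lam

end
end
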